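/- Let φ : [0,1] → ℝ be continuous, L a positive integer, Δ ∈ (0,1], and let g(x) = ∑_{m=0}^L a_m x^m be the degree-L polynomial of best uniform approximation to φ on [0,Δ]. Let N ~ Poisson(np) with p ∈ [0,Δ], let ĝ(N) = ∑_{m=0}^L a_m (N)_m / n^m (an unbiased estimator of g(p)), and let T(x) = min(max(x, inf_{[0,Δ]}φ), sup_{[0,Δ]}φ) be truncation to the range of φ on [0,Δ]. Then |E[T(ĝ(N))] - φ(p)| ≤ √(Var[ĝ(N)]) + 2·E_L(φ,[0,Δ]), where E_L(φ,I) = inf over degree-L polynomials q of sup_{x∈I}|φ(x)-q(x)|. -/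

import Mathlib

/-- Best uniform approximation error of `f` on `I` by polynomials of degree at most `L`. -/
noncomputable def bestApproxError (f : ℝ → ℝ) (L : ℕ) (I : Set ℝ) : ℝ :=
  sInf {e : ℝ | ∃ q : Polynomial ℝ, q.natDegree ≤ L ∧ ∀ x ∈ I, |f x - q.eval x| ≤ e}

/-- The unbiased estimator `ĝ(N) = ∑ m, a m (N)_m / n^m` of a polynomial
`g(p) = ∑ m, a m p^m` under `N ~ Poisson(np)`. -/
noncomputable def polyEstimator (L : ℕ) (a : Fin (L + 1) → ℝ) (n : ℕ) (x : ℕ) : ℝ :=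
  ∑ m : Fin (L + 1), a m * (x.descFactorial (m : ℕ) : ℝ) / (n : ℝ) ^ (m : ℕ)

namespace BPEAux

variable {r : ℝ}

lemma hasSum_expdiv (r : ℝ) : HasSum (fun x : ℕ => r ^ x / (x.factorial : ℝ)) (Real.exp r) := by
  rw [Real.exp_eq_exp_ℝ]
  exact NormedSpace.expSeries_div_hasSum_exp r

lemma hasSum_pois (r : ℝ) :
    HasSum (fun x : ℕ => Real.exp (-r) * r ^ x / (x.factorial : ℝ)) 1 := by
  have h := (hasSum_expdiv r).mul_left (Real.exp (-r))
  rw [← Real.exp_add, neg_add_cancel, Real.exp_zero] at h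
  simpa [mul_div_assoc] using h

lemma summable_pois (r : ℝ) :
    Summable (fun x : ℕ => Real.exp (-r) * r ^ x / (x.factorial : ℝ)) :=
  (hasSum_pois r).summable

lemma tsum_pois (r : ℝ) :
    ∑' x : ℕ, Real.exp (-r) * r ^ x / (x.factorial : ℝ) = 1 :=
  (hasSum_pois r).tsum_eq

lemma pois_nonneg (hr : 0 ≤ r) (x : ℕ) :
    0 ≤ Real.exp (-r) * r ^ x / (x.factorial : ℝ) := by positivity

lemma summable_pois_poly (hr : 0 ≤ r) (k : ℕ) :
    Summable (fun x : ℕ =>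
      Real.exp (-r) * r ^ x / (x.factorial : ℝ) * ((x : ℝ) + 1) ^ k) := by
  refine Summable.of_nonneg_of_le (fun x => by positivity) (fun x => ?_)
    (((Real.summable_pow_div_factorial ((2:ℝ) ^ k * r)).mul_left (Real.exp (-r))))
  have h1 : ((x : ℝ) + 1) ≤ (2 : ℝ) ^ x := by
    exact_mod_cast Nat.lt_two_pow_self (n := x)
  have h2 : ((x : ℝ) + 1) ^ k ≤ ((2 : ℝ) ^ k) ^ x := by
    calc ((x : ℝ) + 1) ^ k ≤ ((2 : ℝ) ^ x) ^ k := by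
          gcongr
      _ = ((2 : ℝ) ^ k) ^ x := by rw [← pow_mul, ← pow_mul, Nat.mul_comm]
  have key : r ^ x * ((x : ℝ) + 1) ^ k ≤ ((2:ℝ) ^ k * r) ^ x := by
    rw [mul_pow]
    calc r ^ x * ((x : ℝ) + 1) ^ k ≤ r ^ x * ((2:ℝ) ^ k) ^ x := by
          gcongr
      _ = ((2:ℝ)^k) ^ x * r ^ x := mul_comm _ _
  calc Real.exp (-r) * r ^ x / (x.factorial : ℝ) * ((x : ℝ) + 1) ^ k
      = Real.exp (-r) * (r ^ x * ((x : ℝ) + 1) ^ k) / (x.factorial : ℝ) := by ring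
    _ ≤ Real.exp (-r) * (((2:ℝ) ^ k * r) ^ x) / (x.factorial : ℝ) := by
        gcongr
    _ = Real.exp (-r) * (((2:ℝ) ^ k * r) ^ x / (x.factorial : ℝ)) := by ring

lemma summable_pois_mul (hr : 0 ≤ r) {f : ℕ → ℝ} {C : ℝ} {k : ℕ}
    (hf : ∀ x : ℕ, |f x| ≤ C * ((x : ℝ) + 1) ^ k) :
    Summable (fun x : ℕ => Real.exp (-r) * r ^ x / (x.factorial : ℝ) * f x) := by
  refine Summable.of_norm_bounded
    (g := fun x : ℕ => C * (Real.exp (-r) * r ^ x / (x.factorial : ℝ) * ((x : ℝ) + 1) ^ k))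
    ((summable_pois_poly hr k).mul_left C) (fun x => ?_)
  rw [Real.norm_eq_abs, abs_mul, abs_of_nonneg (pois_nonneg hr x)]
  calc Real.exp (-r) * r ^ x / (x.factorial : ℝ) * |f x|
      ≤ Real.exp (-r) * r ^ x / (x.factorial : ℝ) * (C * ((x : ℝ) + 1) ^ k) := by
        gcongr
        exact hf x
    _ = C * (Real.exp (-r) * r ^ x / (x.factorial : ℝ) * ((x : ℝ) + 1) ^ k) := by ring

lemma tsum_pois_descFactorial (hr : 0 ≤ r) (m : ℕ) :
    ∑' x : ℕ, Real.exp (-r) * r ^ x / (x.factorial : ℝ) * ((x.descFactorial m : ℕ) : ℝ)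
      = r ^ m := by
  set f : ℕ → ℝ := fun x =>
    Real.exp (-r) * r ^ x / (x.factorial : ℝ) * ((x.descFactorial m : ℕ) : ℝ) with hf
  have hinj : Function.Injective (fun y : ℕ => y + m) := fun a b h => by simpa using h
  have hsupp : Function.support f ⊆ Set.range (fun y : ℕ => y + m) := by
    intro x hx
    rcases le_or_gt m x with h | h
    · exact ⟨x - m, by simpa using Nat.sub_add_cancel h⟩
    · exfalso
      apply hx
      simp [hf, Nat.descFactorial_eq_zero_iff_lt.2 h]
  have hre := hinj.tsum_eq (f := f) hsupp
  have hfy : ∀ y : ℕ, f (y + m) = (Real.exp (-r) * r ^ m) * (r ^ y / (y.factorial : ℝ)) := by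
    intro y
    have hfac : ((y.factorial : ℕ) : ℝ) * (((y + m).descFactorial m : ℕ) : ℝ)
        = (((y + m).factorial : ℕ) : ℝ) := by
      have := Nat.factorial_mul_descFactorial (Nat.le_add_left m y)
      rw [Nat.add_sub_cancel] at this
      exact_mod_cast this
    have h1 : (((y+m).factorial : ℕ) : ℝ) ≠ 0 := Nat.cast_ne_zero.2 (Nat.factorial_ne_zero _)
    have h2 : ((y.factorial : ℕ) : ℝ) ≠ 0 := Nat.cast_ne_zero.2 (Nat.factorial_ne_zero _)
    rw [hf]
    simp only []
    rw [pow_add]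
    field_simp
    linear_combination (r ^ y * r ^ m) * hfac
  rw [← hre, tsum_congr hfy, tsum_mul_left, (hasSum_expdiv r).tsum_eq]
  have hh : Real.exp (-r) * Real.exp r = 1 := by rw [← Real.exp_add]; simp
  linear_combination r ^ m * hh

end BPEAux

/-- Bias bound for the truncated best polynomial estimator:
`|E[T(ĝ(N))] - φ(p)| ≤ √(Var[ĝ(N)]) + 2 E_L(φ, [0,Δ])`, where `N ~ Poisson(np)`,
`g` is the best degree-`L` approximation of `φ` on `[0,Δ]`, `ĝ` is its unbiased
estimator, and `T` truncates to `[inf φ, sup φ]` on `[0,Δ]`. -/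
theorem best_poly_estimator_bias (φ : ℝ → ℝ) (L : ℕ) (Δ : ℝ)
    (hΔ : Δ ∈ Set.Ioc (0:ℝ) 1) (hφ : ContinuousOn φ (Set.Icc 0 Δ))
    (a : Fin (L + 1) → ℝ)
    (hbest : ∀ x ∈ Set.Icc (0:ℝ) Δ,
      |φ x - ∑ m : Fin (L + 1), a m * x ^ (m : ℕ)| ≤ bestApproxError φ L (Set.Icc 0 Δ))
    (n : ℕ) (hn : 0 < n) (p : ℝ) (hp : p ∈ Set.Icc (0:ℝ) Δ) :
    |(∑' x : ℕ, (Real.exp (-(n * p)) * (n * p) ^ x / (x.factorial : ℝ)) *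
          (min (max (polyEstimator L a n x) (sInf (φ '' Set.Icc 0 Δ)))
            (sSup (φ '' Set.Icc 0 Δ))))
        - φ p|
      ≤ Real.sqrt (∑' x : ℕ,
          (Real.exp (-(n * p)) * (n * p) ^ x / (x.factorial : ℝ)) *
            (polyEstimator L a n x -
              ∑' y : ℕ, (Real.exp (-(n * p)) * (n * p) ^ y / (y.factorial : ℝ)) *
                polyEstimator L a n y) ^ 2)
        + 2 * bestApproxError φ L (Set.Icc 0 Δ) := by
  obtain ⟨hΔ0, hΔ1⟩ := hΔ
  obtain ⟨hp0, hpΔ⟩ := hp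
  have hpmem : p ∈ Set.Icc (0:ℝ) Δ := ⟨hp0, hpΔ⟩
  set B := bestApproxError φ L (Set.Icc 0 Δ) with hBdef
  set r : ℝ := (n : ℝ) * p with hrdef
  have hr : 0 ≤ r := mul_nonneg (Nat.cast_nonneg n) hp0
  set w : ℕ → ℝ := fun x => Real.exp (-r) * r ^ x / (x.factorial : ℝ) with hwdef
  set g : ℕ → ℝ := polyEstimator L a n with hgdef
  set lo := sInf (φ '' Set.Icc 0 Δ) with hlodef
  set hi := sSup (φ '' Set.Icc 0 Δ) with hhidef
  have hw0 : ∀ x : ℕ, 0 ≤ w x := fun x => BPEAux.pois_nonneg hr x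
  have hSw : Summable w := BPEAux.summable_pois r
  have hw1 : ∑' x : ℕ, w x = 1 := BPEAux.tsum_pois r
  -- termwise bound for the estimator
  have hterm : ∀ (m : Fin (L+1)) (x : ℕ),
      |a m * ((x.descFactorial (m:ℕ) : ℕ) : ℝ) / (n:ℝ) ^ (m:ℕ)|
        ≤ |a m| * ((x:ℝ)+1) ^ L := by
    intro m x
    have hn' : (1:ℝ) ≤ (n:ℝ) := by exact_mod_cast hn
    have hd : ((x.descFactorial (m:ℕ) : ℕ) : ℝ) ≤ ((x:ℝ)+1) ^ L := by
      calc ((x.descFactorial (m:ℕ) : ℕ) : ℝ) ≤ ((x:ℝ)) ^ (m:ℕ) := by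
            exact_mod_cast Nat.descFactorial_le_pow x (m:ℕ)
        _ ≤ ((x:ℝ)+1) ^ (m:ℕ) := by gcongr <;> simp [Nat.cast_nonneg]
        _ ≤ ((x:ℝ)+1) ^ L := by
            apply pow_le_pow_right₀ (by linarith [Nat.cast_nonneg (α := ℝ) x]) (Fin.is_le m)
    rw [abs_div, abs_mul, Nat.abs_cast, abs_of_nonneg (by positivity : (0:ℝ) ≤ (n:ℝ)^(m:ℕ))]
    calc |a m| * ((x.descFactorial (m:ℕ):ℕ):ℝ) / (n:ℝ)^(m:ℕ)
        ≤ |a m| * ((x.descFactorial (m:ℕ):ℕ):ℝ) := by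
          apply div_le_self (by positivity) (by calc (1:ℝ) = 1^(m:ℕ) := (one_pow _).symm
            _ ≤ (n:ℝ)^(m:ℕ) := by gcongr)
      _ ≤ |a m| * ((x:ℝ)+1) ^ L := mul_le_mul_of_nonneg_left hd (abs_nonneg _)
  set C := ∑ m : Fin (L+1), |a m| with hCdef
  have hgx : ∀ x : ℕ, g x = ∑ m : Fin (L+1),
      a m * ((x.descFactorial (m:ℕ) : ℕ) : ℝ) / (n:ℝ) ^ (m:ℕ) := by
    intro x; rw [hgdef]; rfl
  have hgb : ∀ x : ℕ, |g x| ≤ C * ((x:ℝ)+1) ^ L := by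
    intro x
    rw [hgx x]
    refine (Finset.abs_sum_le_sum_abs _ _).trans ?_
    rw [hCdef, Finset.sum_mul]
    exact Finset.sum_le_sum fun m _ => hterm m x
  -- the mean μ
  set μ := ∑' y : ℕ, w y * g y with hμdef
  have hμsummand : ∀ m : Fin (L+1), Summable (fun x : ℕ =>
      w x * (a m * ((x.descFactorial (m:ℕ):ℕ):ℝ) / (n:ℝ)^(m:ℕ))) :=
    fun m => BPEAux.summable_pois_mul hr (fun x => hterm m x)
  have hμval : μ = ∑ m : Fin (L+1), a m * p ^ (m:ℕ) := by
    have h1 : ∀ x : ℕ, w x * g x = ∑ m : Fin (L+1),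
        w x * (a m * ((x.descFactorial (m:ℕ):ℕ):ℝ) / (n:ℝ)^(m:ℕ)) := by
      intro x
      rw [hgx x, Finset.mul_sum]
    rw [hμdef, tsum_congr h1, Summable.tsum_finsetSum (fun m _ => hμsummand m)]
    refine Finset.sum_congr rfl fun m _ => ?_
    have h2 : (fun x : ℕ => w x * (a m * ((x.descFactorial (m:ℕ):ℕ):ℝ) / (n:ℝ)^(m:ℕ)))
        = fun x : ℕ => (a m / (n:ℝ)^(m:ℕ)) * (w x * ((x.descFactorial (m:ℕ):ℕ):ℝ)) := by
      funext x; ring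
    rw [h2, tsum_mul_left, BPEAux.tsum_pois_descFactorial hr (m:ℕ), hrdef, mul_pow]
    have hnne : ((n:ℝ)) ≠ 0 := Nat.cast_ne_zero.2 hn.ne'
    field_simp
  -- best approximation at p
  have hgp : |φ p - μ| ≤ B := by rw [hμval]; exact hbest p hpmem
  have hB0 : 0 ≤ B := le_trans (abs_nonneg _) hgp
  -- compactness facts
  have hK : IsCompact (φ '' Set.Icc 0 Δ) := isCompact_Icc.image_of_continuousOn hφ
  have hmemK : φ p ∈ φ '' Set.Icc 0 Δ := ⟨p, hpmem, rfl⟩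
  have hlo : lo ≤ φ p := csInf_le hK.bddBelow hmemK
  have hhi : φ p ≤ hi := le_csSup hK.bddAbove hmemK
  have hlohi : lo ≤ hi := hlo.trans hhi
  -- truncation facts
  have hTb : ∀ y : ℝ, |min (max y lo) hi| ≤ max |lo| |hi| := by
    intro y
    apply abs_le.mpr
    constructor
    · have h1 : lo ≤ min (max y lo) hi := le_min (le_max_right _ _) hlohi
      have h2 := neg_abs_le lo
      have h3 := le_max_left |lo| |hi|
      linarith
    · have h1 : min (max y lo) hi ≤ hi := min_le_right _ _
      have h2 := le_abs_self hi
      have h3 := le_max_right |lo| |hi|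
      linarith
  have hST : Summable (fun x : ℕ => w x * min (max (g x) lo) hi) :=
    BPEAux.summable_pois_mul hr (C := max |lo| |hi|) (k := 0)
      (fun x => by simpa using hTb (g x))
  -- deviation bounds
  have hDb : ∀ x : ℕ, |g x - μ| ≤ (C + |μ|) * ((x:ℝ)+1) ^ L := by
    intro x
    have h1 : (1:ℝ) ≤ ((x:ℝ)+1) ^ L := by
      calc (1:ℝ) = 1 ^ L := (one_pow L).symm
        _ ≤ ((x:ℝ)+1) ^ L := by gcongr <;> simp [Nat.cast_nonneg]
    calc |g x - μ| ≤ |g x| + |μ| := abs_sub _ _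
      _ ≤ (C + |μ|) * ((x:ℝ)+1) ^ L := by
          have h2 := hgb x
          nlinarith [abs_nonneg μ, abs_nonneg (g x)]
  have hD2b : ∀ x : ℕ, |(g x - μ)^2| ≤ (C + |μ|)^2 * ((x:ℝ)+1) ^ (2*L) := by
    intro x
    rw [abs_of_nonneg (sq_nonneg _), ← sq_abs]
    calc |g x - μ|^2 ≤ ((C + |μ|) * ((x:ℝ)+1)^L)^2 := by
          have h := hDb x
          have h2 := abs_nonneg (g x - μ)
          nlinarith
      _ = (C + |μ|)^2 * ((x:ℝ)+1)^(2*L) := by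
          rw [mul_pow, ← pow_mul, Nat.mul_comm L 2]
  have hSD2 : Summable (fun x : ℕ => w x * (g x - μ)^2) :=
    BPEAux.summable_pois_mul hr hD2b
  have hSabs : Summable (fun x : ℕ => w x * |g x - μ|) :=
    BPEAux.summable_pois_mul hr (fun x => by rw [abs_abs]; exact hDb x)
  set ν := ∑' x : ℕ, w x * |g x - μ| with hνdef
  have hν0 : 0 ≤ ν := tsum_nonneg fun x => mul_nonneg (hw0 x) (abs_nonneg _)
  -- variance inequality
  have hvar : ν^2 ≤ ∑' x : ℕ, w x * (g x - μ)^2 := by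
    have hexp : ∀ x : ℕ, w x * (|g x - μ| - ν)^2
        = w x * (g x - μ)^2 - (2*ν) * (w x * |g x - μ|) + ν^2 * w x := by
      intro x
      rw [sub_sq, sq_abs]
      ring
    have h1 : Summable (fun x : ℕ => w x * (g x - μ)^2 - (2*ν) * (w x * |g x - μ|)) :=
      hSD2.sub (hSabs.mul_left (2*ν))
    have h2 : Summable (fun x : ℕ => ν^2 * w x) := hSw.mul_left _
    have h0 : 0 ≤ ∑' x : ℕ, w x * (|g x - μ| - ν)^2 :=
      tsum_nonneg fun x => mul_nonneg (hw0 x) (sq_nonneg _)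
    rw [tsum_congr hexp, Summable.tsum_add h1 h2, Summable.tsum_sub hSD2 (hSabs.mul_left (2*ν)),
      tsum_mul_left, tsum_mul_left, hw1, ← hνdef] at h0
    nlinarith [h0]
  have hsqrt : ν ≤ Real.sqrt (∑' x : ℕ, w x * (g x - μ)^2) := by
    have h := Real.sqrt_le_sqrt hvar
    rwa [Real.sqrt_sq hν0] at h
  -- pointwise bounds
  have hTgp : |min (max μ lo) hi - φ p| ≤ B := by
    rcases le_total μ lo with h | h
    · rw [max_eq_right h, min_eq_left hlohi]
      have h1 := le_abs_self (φ p - μ)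
      rw [abs_of_nonpos (by linarith : lo - φ p ≤ 0)]
      linarith
    · rw [max_eq_left h]
      rcases le_total μ hi with h2 | h2
      · rw [min_eq_left h2, abs_sub_comm]
        exact hgp
      · rw [min_eq_right h2]
        have h1 := neg_le_abs (φ p - μ)
        rw [abs_of_nonneg (by linarith : (0:ℝ) ≤ hi - φ p)]
        linarith
  have hTlip : ∀ u : ℝ, |min (max u lo) hi - min (max μ lo) hi| ≤ |u - μ| := by
    intro u
    have h1 := abs_min_sub_min_le_max (max u lo) hi (max μ lo) hi
    have h2 := abs_max_sub_max_le_abs u μ lo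
    have h3 : max |max u lo - max μ lo| |hi - hi| ≤ |max u lo - max μ lo| :=
      max_le le_rfl (by simp)
    linarith
  have hpt : ∀ x : ℕ, |w x * min (max (g x) lo) hi - w x * φ p| ≤ w x * (|g x - μ| + B) := by
    intro x
    rw [← mul_sub, abs_mul, abs_of_nonneg (hw0 x)]
    refine mul_le_mul_of_nonneg_left ?_ (hw0 x)
    calc |min (max (g x) lo) hi - φ p|
        ≤ |min (max (g x) lo) hi - min (max μ lo) hi| + |min (max μ lo) hi - φ p| :=
          abs_sub_le _ _ _
      _ ≤ |g x - μ| + B := add_le_add (hTlip (g x)) hTgp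
  -- assemble
  have hSabsB : Summable (fun x : ℕ => w x * (|g x - μ| + B)) := by
    have h := hSabs.add (hSw.mul_right B)
    simpa [mul_add] using h
  have hSdiff : Summable (fun x : ℕ => |w x * min (max (g x) lo) hi - w x * φ p|) :=
    Summable.of_nonneg_of_le (fun x => abs_nonneg _) hpt hSabsB
  have hkey : |(∑' x : ℕ, w x * min (max (g x) lo) hi) - φ p| ≤ ν + B := by
    have he : (∑' x : ℕ, w x * min (max (g x) lo) hi) - φ p
        = ∑' x : ℕ, (w x * min (max (g x) lo) hi - w x * φ p) := by
      rw [Summable.tsum_sub hST (hSw.mul_right (φ p)), tsum_mul_right, hw1, one_mul]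
    rw [he]
    calc |∑' x : ℕ, (w x * min (max (g x) lo) hi - w x * φ p)|
        ≤ ∑' x : ℕ, |w x * min (max (g x) lo) hi - w x * φ p| := by
          simpa [Real.norm_eq_abs] using
            norm_tsum_le_tsum_norm (f := fun x : ℕ => w x * min (max (g x) lo) hi - w x * φ p)
              (by simpa [Real.norm_eq_abs] using hSdiff)
      _ ≤ ∑' x : ℕ, w x * (|g x - μ| + B) := Summable.tsum_le_tsum hpt hSdiff hSabsB
      _ = ν + B := by
          have h : ∀ x : ℕ, w x * (|g x - μ| + B) = w x * |g x - μ| + w x * B :=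
            fun x => mul_add _ _ _
          rw [tsum_congr h, Summable.tsum_add hSabs (hSw.mul_right B), tsum_mul_right, hw1, one_mul,
            ← hνdef]
  have hfin : |(∑' x : ℕ, w x * min (max (g x) lo) hi) - φ p|
      ≤ Real.sqrt (∑' x : ℕ, w x * (g x - μ)^2) + 2 * B := by
    linarith [hkey, hsqrt, hB0]
  exact hfin
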